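/- If ((f_n),(g_n)) is a weakly dual pair for H, i.e., ⟨f,g⟩ = ∑_n ⟨f,f_n⟩⟨g_n,g⟩ for all f,g ∈ H, then for every A > 0 there exist positive weights (ω_n) such that (ω_n f_n) is a lower semi frame for H with bound A. -/

import Mathlib

open scoped ENNReal NNReal

/-- The Bessel-type sum `∑ₙ |⟨f, gₙ⟩|²` valued in `ℝ≥0∞`. -/
noncomputable def bSum {H : Type*} [NormedAddCommGroup H] [InnerProductSpace ℂ H]
    (g : ℕ → H) (f : H) : ℝ≥0∞ :=
  ∑' n, ((‖(inner ℂ f (g n) : ℂ)‖₊ : ℝ≥0∞)) ^ 2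

theorem stmt2 {H : Type*} [NormedAddCommGroup H] [InnerProductSpace ℂ H] [CompleteSpace H]
    [TopologicalSpace.SeparableSpace H] (hinf : ¬ FiniteDimensional ℂ H)
    (F G : ℕ → H)
    (hdual : ∀ f g : H,
      HasSum (fun n => (inner ℂ f (F n) : ℂ) * (inner ℂ (G n) g : ℂ)) (inner ℂ f g : ℂ)) :
    ∀ A : ℝ, 0 < A → ∃ ω : ℕ → ℝ, (∀ n, 0 < ω n) ∧
      ∀ f : H, ENNReal.ofReal A * (‖f‖₊ : ℝ≥0∞) ^ 2
        ≤ bSum (fun n => ((ω n : ℝ) : ℂ) • F n) f := by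
  intro A hA
  set ω : ℕ → ℝ := fun n => Real.sqrt (A * 2 ^ (n + 1)) * (‖G n‖ + 1) with hω
  have hωpos : ∀ n, 0 < ω n := by
    intro n
    exact mul_pos (Real.sqrt_pos.2 (by positivity)) (by positivity)
  refine ⟨ω, hωpos, ?_⟩
  intro f
  by_cases htop : bSum (fun n => ((ω n : ℝ) : ℂ) • F n) f = ⊤
  · rw [htop]; exact le_top
  -- real-valued quantities
  set a : ℕ → ℝ≥0 := fun n => ‖(inner ℂ f (((ω n : ℝ) : ℂ) • F n) : ℂ)‖₊ with ha
  set c : ℕ → ℝ := fun n => ω n * ‖(inner ℂ f (F n) : ℂ)‖ with hc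
  have hac : ∀ n, (a n : ℝ) = c n := by
    intro n
    simp only [ha, coe_nnnorm, inner_smul_right, norm_mul, Complex.norm_real,
      Real.norm_eq_abs, abs_of_pos (hωpos n), hc]
  have hcnn : ∀ n, 0 ≤ c n := fun n => (hac n) ▸ (a n).2
  have hbSum : bSum (fun n => ((ω n : ℝ) : ℂ) • F n) f = ∑' n, ((a n ^ 2 : ℝ≥0) : ℝ≥0∞) := by
    unfold bSum
    congr 1
  have hsummA : Summable (fun n => a n ^ 2) := by
    rw [hbSum] at htop
    exact ENNReal.tsum_coe_ne_top_iff_summable.mp htop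
  have hsummC : Summable (fun n => c n ^ 2) := by
    have h2 := NNReal.summable_coe.mpr hsummA
    refine h2.congr fun n => ?_
    rw [NNReal.coe_pow, hac]
  -- bound on the weights
  have hb_bound : ∀ n, (‖G n‖ / ω n) ^ 2 ≤ A⁻¹ * (1 / 2 : ℝ) ^ (n + 1) := by
    intro n
    have hs : (0:ℝ) < Real.sqrt (A * 2 ^ (n + 1)) := Real.sqrt_pos.2 (by positivity)
    have h1 : ‖G n‖ / ω n ≤ 1 / Real.sqrt (A * 2 ^ (n + 1)) := by
      rw [div_le_div_iff₀ (hωpos n) hs, one_mul]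
      simp only [hω]
      nlinarith [hs.le, norm_nonneg (G n)]
    have h2 : (‖G n‖ / ω n) ^ 2 ≤ (1 / Real.sqrt (A * 2 ^ (n + 1))) ^ 2 :=
      pow_le_pow_left₀ (by positivity) h1 2
    refine h2.trans_eq ?_
    rw [div_pow, one_pow, Real.sq_sqrt (by positivity)]
    field_simp
    rw [← mul_pow]; norm_num
  set b : ℕ → ℝ := fun n => ‖G n‖ * ‖f‖ / ω n with hb
  have hbnn : ∀ n, 0 ≤ b n := fun n => div_nonneg (by positivity) (hωpos n).le
  have hb2 : ∀ n, b n ^ 2 ≤ ‖f‖ ^ 2 * A⁻¹ * (1 / 2 : ℝ) ^ (n + 1) := by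
    intro n
    have : b n ^ 2 = ‖f‖ ^ 2 * (‖G n‖ / ω n) ^ 2 := by
      simp only [hb]; field_simp
    rw [this, mul_assoc]
    exact mul_le_mul_of_nonneg_left (hb_bound n) (by positivity)
  have hgeo : Summable (fun n : ℕ => ‖f‖ ^ 2 * A⁻¹ * (1 / 2 : ℝ) ^ (n + 1)) := by
    apply Summable.mul_left
    exact (summable_geometric_two.mul_left (1/2)).congr fun n => by rw [pow_succ]; ring
  have hsummB : Summable (fun n => b n ^ 2) :=
    Summable.of_nonneg_of_le (fun n => by positivity) hb2 hgeo
  have hT : ∑' n, b n ^ 2 ≤ ‖f‖ ^ 2 * A⁻¹ := by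
    calc ∑' n, b n ^ 2 ≤ ∑' n, ‖f‖ ^ 2 * A⁻¹ * (1 / 2 : ℝ) ^ (n + 1) :=
          Summable.tsum_le_tsum hb2 hsummB hgeo
      _ = ‖f‖ ^ 2 * A⁻¹ * ∑' n : ℕ, (1 / 2 : ℝ) ^ (n + 1) := tsum_mul_left
      _ = ‖f‖ ^ 2 * A⁻¹ := by
          have : ∑' n : ℕ, (1 / 2 : ℝ) ^ (n + 1) = 1 := by
            refine (tsum_congr fun n => ?_).trans (tsum_geometric_two' 1)
            rw [pow_succ, one_div_pow]
            ring
          rw [this, mul_one]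
  -- Hölder / Cauchy-Schwarz
  set S : ℝ := ∑' n, c n ^ 2 with hS
  set T : ℝ := ∑' n, b n ^ 2 with hTdef
  have hSnn : 0 ≤ S := tsum_nonneg fun n => sq_nonneg _
  have hTnn : 0 ≤ T := tsum_nonneg fun n => sq_nonneg _
  have hrp : ∀ x : ℝ, x ^ (2:ℝ) = x ^ 2 := fun x => by
    rw [show (2:ℝ) = ((2:ℕ):ℝ) by norm_num, Real.rpow_natCast]
  have hpq : Real.HolderConjugate 2 2 := Real.HolderConjugate.two_two
  have hCsum2 : Summable fun n => c n ^ (2:ℝ) := hsummC.congr fun n => (hrp _).symm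
  have hBsum2 : Summable fun n => b n ^ (2:ℝ) := hsummB.congr fun n => (hrp _).symm
  obtain ⟨hKsum, hK⟩ := Real.summable_and_inner_le_Lp_mul_Lq_tsum_of_nonneg hpq hcnn hbnn hCsum2 hBsum2
  have hK' : ∑' n, c n * b n ≤ S ^ ((1:ℝ)/2) * T ^ ((1:ℝ)/2) := by
    have e1 : ∑' n, c n ^ (2:ℝ) = S := tsum_congr fun n => hrp _
    have e2 : ∑' n, b n ^ (2:ℝ) = T := tsum_congr fun n => hrp _
    rw [e1, e2] at hK
    simpa using hK
  -- ‖f‖² ≤ ∑ c b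
  have hsum_prod : Summable (fun n => (inner ℂ f (F n) : ℂ) * (inner ℂ (G n) f : ℂ)) :=
    (hdual f f).summable
  have habs : Summable (fun n => ‖(inner ℂ f (F n) : ℂ) * (inner ℂ (G n) f : ℂ)‖) :=
    summable_norm_iff.mpr hsum_prod
  have hnormsum : ‖(inner ℂ f f : ℂ)‖ ≤ ∑' n, ‖(inner ℂ f (F n) : ℂ) * (inner ℂ (G n) f : ℂ)‖ := by
    rw [← (hdual f f).tsum_eq]
    exact norm_tsum_le_tsum_norm habs
  have hfsq : ‖f‖ ^ 2 ≤ ∑' n, c n * b n := by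
    have hinner : ‖(inner ℂ f f : ℂ)‖ = ‖f‖ ^ 2 := by
      rw [inner_self_eq_norm_sq_to_K, norm_pow]
      simp
    have hterm : ∀ n, ‖(inner ℂ f (F n) : ℂ) * (inner ℂ (G n) f : ℂ)‖ ≤ c n * b n := by
      intro n
      rw [norm_mul]
      have h1 : ‖(inner ℂ (G n) f : ℂ)‖ ≤ ‖G n‖ * ‖f‖ := norm_inner_le_norm _ _
      have h2 : c n * b n = ‖(inner ℂ f (F n) : ℂ)‖ * (‖G n‖ * ‖f‖) := by
        simp only [hc, hb]
        field_simp
        have := (hωpos n).ne'; field_simp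
      rw [h2]
      exact mul_le_mul_of_nonneg_left h1 (norm_nonneg _)
    calc ‖f‖ ^ 2 = ‖(inner ℂ f f : ℂ)‖ := hinner.symm
      _ ≤ ∑' n, ‖(inner ℂ f (F n) : ℂ) * (inner ℂ (G n) f : ℂ)‖ := hnormsum
      _ ≤ ∑' n, c n * b n := Summable.tsum_le_tsum hterm habs hKsum
  -- combine: A * ‖f‖² ≤ S
  have hmain : A * ‖f‖ ^ 2 ≤ S := by
    have hsq : (S ^ ((1:ℝ)/2) * T ^ ((1:ℝ)/2)) ^ 2 = S * T := by
      rw [mul_pow, ← Real.rpow_natCast (S ^ ((1:ℝ)/2)) 2, ← Real.rpow_natCast (T ^ ((1:ℝ)/2)) 2,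
        ← Real.rpow_mul hSnn, ← Real.rpow_mul hTnn]
      norm_num
    have h1 : (‖f‖ ^ 2) ^ 2 ≤ S * T := by
      have h0 : 0 ≤ ∑' n, c n * b n :=
        tsum_nonneg fun n => mul_nonneg (hcnn n) (hbnn n)
      calc (‖f‖ ^ 2) ^ 2 ≤ (∑' n, c n * b n) ^ 2 :=
            pow_le_pow_left₀ (by positivity) hfsq 2
        _ ≤ (S ^ ((1:ℝ)/2) * T ^ ((1:ℝ)/2)) ^ 2 := pow_le_pow_left₀ h0 hK' 2
        _ = S * T := hsq
    have h2 : S * T ≤ S * (‖f‖ ^ 2 * A⁻¹) := mul_le_mul_of_nonneg_left hT hSnn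
    -- (‖f‖²)² ≤ S * ‖f‖² / A ; if ‖f‖ = 0 trivial else divide
    rcases eq_or_lt_of_le (norm_nonneg f) with h0 | h0
    · rw [← h0]; simpa using hSnn
    · have hf2 : 0 < ‖f‖ ^ 2 := by positivity
      have h3 : (‖f‖ ^ 2) ^ 2 ≤ S * ‖f‖ ^ 2 * A⁻¹ := by nlinarith
      have h4 : A * (‖f‖ ^ 2) ^ 2 ≤ S * ‖f‖ ^ 2 := by
        have := mul_le_mul_of_nonneg_left h3 hA.le
        calc A * (‖f‖ ^ 2) ^ 2 ≤ A * (S * ‖f‖ ^ 2 * A⁻¹) := this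
          _ = S * ‖f‖ ^ 2 := by field_simp
      nlinarith
  -- transfer to ℝ≥0∞
  rw [hbSum]
  have hcoeS : (∑' n, ((a n ^ 2 : ℝ≥0) : ℝ≥0∞)) = ENNReal.ofReal S := by
    rw [← ENNReal.coe_tsum hsummA]
    rw [← ENNReal.ofReal_coe_nnreal]
    congr 1
    rw [NNReal.coe_tsum]
    exact tsum_congr fun n => by rw [NNReal.coe_pow, hac]
  rw [hcoeS]
  have hlhs : ENNReal.ofReal A * (‖f‖₊ : ℝ≥0∞) ^ 2 = ENNReal.ofReal (A * ‖f‖ ^ 2) := by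
    rw [ENNReal.ofReal_mul hA.le, ← enorm_eq_nnnorm, ← ofReal_norm, ← ENNReal.ofReal_pow (norm_nonneg f)]
  rw [hlhs]
  exact ENNReal.ofReal_le_ofReal hmain
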